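/- Let T > 0, D_A, D_B, D_C > 0, γ ≥ 0, and let f_A, f_B : ℝ × [0, T] → ℝ be bounded measurable functions with M_0 := max(T · sup|f_A|, T · sup|f_B|) > 0. Let (A_i), (B_i), (C_i) (i ≥ 0) be bounded measurable functions ℝ × [0, T] → ℝ satisfying: A_0(x,t) = ∫_0^t ∫_ℝ φ_{D_A}(x−y, t−s) f_A(y, s) dy ds, B_0(x,t) = ∫_0^t ∫_ℝ φ_{D_B}(x−y, t−s) f_B(y, s) dy ds, C_0 = 0, and for every i ≥ 1: A_i(x,t) = −∫_0^t ∫_ℝ φ_{D_A}(x−y, t−s) [ Σ_{j=0}^{i−1} A_j(y,s) B_{i−1−j}(y,s) − γ C_{i−1}(y,s) ] dy ds, B_i(x,t) = −∫_0^t ∫_ℝ φ_{D_B}(x−y, t−s) [ Σ_{j=0}^{i−1} A_j(y,s) B_{i−1−j}(y,s) − γ C_{i−1}(y,s) ] dy ds, and C_i(x,t) = ∫_0^t ∫_ℝ φ_{D_C}(x−y, t−s) [ Σ_{j=0}^{i−1} A_j(y,s) B_{i−1−j}(y,s) − γ C_{i−1}(y,s) ] dy ds. Then for every real λ with 0 <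 λ < 1/(T(12 M_0 + 10 γ)) and every i ≥ 0: λ^i sup_{x, t ∈ [0,T]} |A_i(x,t)| ≤ M_0 / 2^i, λ^i sup |B_i(x,t)| ≤ M_0 / 2^i, and λ^i sup |C_i(x,t)| ≤ M_0 / 2^i. -/

import Mathlib

open MeasureTheory

/-- The one-dimensional heat kernel `φ_D(x,t) = (4πDt)^{-1/2} exp(−x²/(4Dt))`. -/
noncomputable def heatKernel (D x t : ℝ) : ℝ :=
  (4 * Real.pi * D * t) ^ (-(1 : ℝ) / 2) * Real.exp (-(x ^ 2) / (4 * D * t))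

lemma heatKernel_zero (D x : ℝ) : heatKernel D x 0 = 0 := by
  simp [heatKernel, Real.zero_rpow (by norm_num : -(1:ℝ)/2 ≠ 0)]

lemma heatKernel_nonneg {D t : ℝ} (hD : 0 < D) (ht : 0 ≤ t) (x : ℝ) :
    0 ≤ heatKernel D x t :=
  mul_nonneg (Real.rpow_nonneg (by positivity) _) (Real.exp_nonneg _)

lemma heatKernel_eq {D τ : ℝ} (hD : 0 < D) (hτ : 0 < τ) (x : ℝ) :
    (fun y : ℝ => heatKernel D (x - y) τ)
      = fun y => (4*Real.pi*D*τ) ^ (-(1:ℝ)/2) * Real.exp (-((4*D*τ)⁻¹) * (x - y)^2) := by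
  funext y
  unfold heatKernel
  congr 2
  field_simp

lemma heatKernel_integrable {D τ : ℝ} (hD : 0 < D) (hτ : 0 < τ) (x : ℝ) :
    Integrable (fun y => heatKernel D (x - y) τ) := by
  rw [heatKernel_eq hD hτ x]
  exact ((integrable_exp_neg_mul_sq (by positivity)).comp_sub_left x).const_mul _

lemma heatKernel_integral {D τ : ℝ} (hD : 0 < D) (hτ : 0 < τ) (x : ℝ) :
    ∫ y, heatKernel D (x - y) τ = 1 := by
  rw [heatKernel_eq hD hτ x]
  rw [integral_const_mul]
  have h1 : ∫ y : ℝ, Real.exp (-((4*D*τ)⁻¹) * (x - y)^2)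
      = ∫ y : ℝ, Real.exp (-((4*D*τ)⁻¹) * y^2) :=
    integral_sub_left_eq_self (fun y => Real.exp (-((4*D*τ)⁻¹) * y^2)) _ x
  rw [h1, integral_gaussian]
  have h2 : Real.pi / (4*D*τ)⁻¹ = 4*Real.pi*D*τ := by field_simp
  rw [h2, Real.sqrt_eq_rpow]
  rw [show -(1:ℝ)/2 = -(1/2 : ℝ) by norm_num,
    Real.rpow_neg (by positivity : (0:ℝ) ≤ 4*Real.pi*D*τ)]
  exact inv_mul_cancel₀ (by positivity)

lemma duhamel_bound {T D K : ℝ} (hD : 0 < D) (hK : 0 ≤ K)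
    (g : ℝ → ℝ → ℝ) (hg : ∀ y : ℝ, ∀ s ∈ Set.Icc (0:ℝ) T, |g y s| ≤ K)
    (x t : ℝ) (ht : t ∈ Set.Icc (0:ℝ) T) :
    |∫ s in (0:ℝ)..t, ∫ y, heatKernel D (x - y) (t - s) * g y s| ≤ T * K := by
  have h1 : ∀ s ∈ Set.uIoc (0:ℝ) t, ‖∫ y, heatKernel D (x - y) (t - s) * g y s‖ ≤ K := by
    intro s hs
    rw [Set.uIoc_of_le ht.1] at hs
    rcases eq_or_lt_of_le hs.2 with h | h
    · have hz : (fun y => heatKernel D (x - y) (t - s) * g y s) = fun _ => 0 := by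
        funext y; rw [h, sub_self, heatKernel_zero, zero_mul]
      rw [hz, integral_zero]
      simpa using hK
    · have hτ : 0 < t - s := sub_pos.2 h
      have hsIcc : s ∈ Set.Icc (0:ℝ) T := ⟨hs.1.le, hs.2.trans ht.2⟩
      have hint : Integrable (fun y => K * heatKernel D (x - y) (t - s)) :=
        (heatKernel_integrable hD hτ x).const_mul K
      have hb : ∀ y : ℝ, ‖heatKernel D (x - y) (t - s) * g y s‖
          ≤ K * heatKernel D (x - y) (t - s) := by
        intro y
        rw [Real.norm_eq_abs, abs_mul, abs_of_nonneg (heatKernel_nonneg hD hτ.le _)]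
        calc heatKernel D (x - y) (t - s) * |g y s|
            ≤ heatKernel D (x - y) (t - s) * K :=
              mul_le_mul_of_nonneg_left (hg y s hsIcc) (heatKernel_nonneg hD hτ.le _)
          _ = K * heatKernel D (x - y) (t - s) := mul_comm _ _
      calc ‖∫ y, heatKernel D (x - y) (t - s) * g y s‖
          ≤ ∫ y, K * heatKernel D (x - y) (t - s) :=
            norm_integral_le_of_norm_le hint (Filter.Eventually.of_forall hb)
        _ = K * ∫ y, heatKernel D (x - y) (t - s) := integral_const_mul _ _
        _ = K := by rw [heatKernel_integral hD hτ x, mul_one]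
  calc |∫ s in (0:ℝ)..t, ∫ y, heatKernel D (x - y) (t - s) * g y s|
      ≤ K * |t - 0| := intervalIntegral.norm_integral_le_of_norm_le_const h1
    _ = K * t := by rw [sub_zero, abs_of_nonneg ht.1]
    _ ≤ K * T := mul_le_mul_of_nonneg_left ht.2 hK
    _ = T * K := mul_comm _ _

lemma catalan_le_four_pow (n : ℕ) : catalan n ≤ 4 ^ n :=
  calc catalan n ≤ (n+1) * catalan n := Nat.le_mul_of_pos_left _ n.succ_pos
    _ = n.centralBinom := succ_mul_catalan_eq_centralBinom n
    _ = (2*n).choose n := Nat.centralBinom_eq_two_mul_choose n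
    _ ≤ (2*n+1).choose n := Nat.choose_mono n (Nat.le_succ _)
    _ ≤ 4 ^ n := Nat.choose_middle_le_pow n

lemma catalan_range (m : ℕ) :
    catalan (m+1) = ∑ j ∈ Finset.range (m+1), catalan j * catalan (m - j) := by
  rw [catalan_succ, ← Finset.sum_range (fun j => catalan j * catalan (m - j))]

lemma catalan_mono_succ (m : ℕ) : catalan m ≤ catalan (m+1) := by
  rw [catalan_range]
  calc catalan m = catalan 0 * catalan (m - 0) := by simp
    _ ≤ ∑ j ∈ Finset.range (m+1), catalan j * catalan (m - j) :=
      Finset.single_le_sum (f := fun j => catalan j * catalan (m - j))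
        (fun j _ => Nat.zero_le _) (Finset.mem_range.mpr m.succ_pos)

/-- Geometric bounds on the perturbation terms of the reaction–diffusion system
`A + B ⇌ C`: if `A_i, B_i, C_i` are the terms of the perturbation series (given by the
heat-kernel convolution recursion via Duhamel's formula) and
`M₀ = max(T·sup|f_A|, T·sup|f_B|) > 0`, then for all `0 < λ < 1/(T(12M₀ + 10γ))` and all
`i`, `λ^i sup|A_i| ≤ M₀/2^i`, `λ^i sup|B_i| ≤ M₀/2^i`, and `λ^i sup|C_i| ≤ M₀/2^i`,
where the suprema are over `ℝ × [0,T]`. -/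
theorem perturbation_terms_geometric_bound
    (T DA DB DC γ : ℝ) (hT : 0 < T) (hDA : 0 < DA) (hDB : 0 < DB) (hDC : 0 < DC)
    (hγ : 0 ≤ γ)
    (fA fB : ℝ → ℝ → ℝ)
    (hfAm : Measurable (Function.uncurry fA)) (hfBm : Measurable (Function.uncurry fB))
    (hfAb : ∃ K, ∀ x : ℝ, ∀ t ∈ Set.Icc (0 : ℝ) T, |fA x t| ≤ K)
    (hfBb : ∃ K, ∀ x : ℝ, ∀ t ∈ Set.Icc (0 : ℝ) T, |fB x t| ≤ K)
    (M₀ : ℝ)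
    (hM₀ : M₀ = max (T * ⨆ p : ℝ × Set.Icc (0 : ℝ) T, |fA p.1 p.2|)
                    (T * ⨆ p : ℝ × Set.Icc (0 : ℝ) T, |fB p.1 p.2|))
    (hM₀pos : 0 < M₀)
    (A B C : ℕ → ℝ → ℝ → ℝ)
    (hAm : ∀ i, Measurable (Function.uncurry (A i)))
    (hBm : ∀ i, Measurable (Function.uncurry (B i)))
    (hCm : ∀ i, Measurable (Function.uncurry (C i)))
    (hAb : ∀ i, ∃ K, ∀ x : ℝ, ∀ t ∈ Set.Icc (0 : ℝ) T, |A i x t| ≤ K)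
    (hBb : ∀ i, ∃ K, ∀ x : ℝ, ∀ t ∈ Set.Icc (0 : ℝ) T, |B i x t| ≤ K)
    (hCb : ∀ i, ∃ K, ∀ x : ℝ, ∀ t ∈ Set.Icc (0 : ℝ) T, |C i x t| ≤ K)
    (hA0 : ∀ x : ℝ, ∀ t ∈ Set.Icc (0 : ℝ) T,
      A 0 x t = ∫ s in (0 : ℝ)..t, ∫ y : ℝ, heatKernel DA (x - y) (t - s) * fA y s)
    (hB0 : ∀ x : ℝ, ∀ t ∈ Set.Icc (0 : ℝ) T,
      B 0 x t = ∫ s in (0 : ℝ)..t, ∫ y : ℝ, heatKernel DB (x - y) (t - s) * fB y s)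
    (hC0 : ∀ x : ℝ, ∀ t ∈ Set.Icc (0 : ℝ) T, C 0 x t = 0)
    (hArec : ∀ i : ℕ, 1 ≤ i → ∀ x : ℝ, ∀ t ∈ Set.Icc (0 : ℝ) T,
      A i x t = -∫ s in (0 : ℝ)..t, ∫ y : ℝ, heatKernel DA (x - y) (t - s) *
        ((∑ j ∈ Finset.range i, A j y s * B (i - 1 - j) y s) - γ * C (i - 1) y s))
    (hBrec : ∀ i : ℕ, 1 ≤ i → ∀ x : ℝ, ∀ t ∈ Set.Icc (0 : ℝ) T,
      B i x t = -∫ s in (0 : ℝ)..t, ∫ y : ℝ, heatKernel DB (x - y) (t - s) *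
        ((∑ j ∈ Finset.range i, A j y s * B (i - 1 - j) y s) - γ * C (i - 1) y s))
    (hCrec : ∀ i : ℕ, 1 ≤ i → ∀ x : ℝ, ∀ t ∈ Set.Icc (0 : ℝ) T,
      C i x t = ∫ s in (0 : ℝ)..t, ∫ y : ℝ, heatKernel DC (x - y) (t - s) *
        ((∑ j ∈ Finset.range i, A j y s * B (i - 1 - j) y s) - γ * C (i - 1) y s)) :
    ∀ lam : ℝ, 0 < lam → lam < 1 / (T * (12 * M₀ + 10 * γ)) →
      ∀ i : ℕ,
        lam ^ i * (⨆ p : ℝ × Set.Icc (0 : ℝ) T, |A i p.1 p.2|) ≤ M₀ / 2 ^ i ∧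
        lam ^ i * (⨆ p : ℝ × Set.Icc (0 : ℝ) T, |B i p.1 p.2|) ≤ M₀ / 2 ^ i ∧
        lam ^ i * (⨆ p : ℝ × Set.Icc (0 : ℝ) T, |C i p.1 p.2|) ≤ M₀ / 2 ^ i := by
  intro lam hlam hlam' i
  have h0T : (0:ℝ) ∈ Set.Icc (0:ℝ) T := ⟨le_refl 0, hT.le⟩
  haveI hne : Nonempty (ℝ × Set.Icc (0:ℝ) T) := ⟨⟨0, ⟨0, h0T⟩⟩⟩
  -- supremum machinery
  have supb : ∀ (F : ℝ → ℝ → ℝ) (K : ℝ), (∀ x:ℝ, ∀ t ∈ Set.Icc (0:ℝ) T, |F x t| ≤ K) →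
      (⨆ p : ℝ × Set.Icc (0:ℝ) T, |F p.1 p.2|) ≤ K := fun F K h =>
    ciSup_le fun p => h p.1 p.2 p.2.2
  have suple : ∀ (F : ℝ → ℝ → ℝ), (∃ K, ∀ x:ℝ, ∀ t ∈ Set.Icc (0:ℝ) T, |F x t| ≤ K) →
      ∀ x : ℝ, ∀ t ∈ Set.Icc (0:ℝ) T,
        |F x t| ≤ ⨆ p : ℝ × Set.Icc (0:ℝ) T, |F p.1 p.2| := by
    rintro F ⟨K, hK⟩ x t ht
    exact le_ciSup (f := fun p : ℝ × Set.Icc (0:ℝ) T => |F p.1 p.2|)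
      ⟨K, by rintro v ⟨p, rfl⟩; exact hK p.1 p.2 p.2.2⟩
      (⟨x, ⟨t, ht⟩⟩ : ℝ × Set.Icc (0:ℝ) T)
  have supnn : ∀ (F : ℝ → ℝ → ℝ), (∃ K, ∀ x:ℝ, ∀ t ∈ Set.Icc (0:ℝ) T, |F x t| ≤ K) →
      0 ≤ ⨆ p : ℝ × Set.Icc (0:ℝ) T, |F p.1 p.2| := fun F hb =>
    (abs_nonneg _).trans (suple F hb 0 0 h0T)
  set SA : ℕ → ℝ := fun i => ⨆ p : ℝ × Set.Icc (0:ℝ) T, |A i p.1 p.2| with hSAdef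
  set SB : ℕ → ℝ := fun i => ⨆ p : ℝ × Set.Icc (0:ℝ) T, |B i p.1 p.2| with hSBdef
  set SC : ℕ → ℝ := fun i => ⨆ p : ℝ × Set.Icc (0:ℝ) T, |C i p.1 p.2| with hSCdef
  have hSAnn : ∀ j, 0 ≤ SA j := fun j => supnn _ (hAb j)
  have hSBnn : ∀ j, 0 ≤ SB j := fun j => supnn _ (hBb j)
  have hSCnn : ∀ j, 0 ≤ SC j := fun j => supnn _ (hCb j)
  -- base case bounds
  have hfAnn : 0 ≤ ⨆ p : ℝ × Set.Icc (0:ℝ) T, |fA p.1 p.2| := supnn fA hfAb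
  have hfBnn : 0 ≤ ⨆ p : ℝ × Set.Icc (0:ℝ) T, |fB p.1 p.2| := supnn fB hfBb
  have hA0b : SA 0 ≤ M₀ := by
    apply supb; intro x t ht
    rw [hA0 x t ht]
    exact (duhamel_bound hDA hfAnn fA (suple fA hfAb) x t ht).trans (hM₀ ▸ le_max_left _ _)
  have hB0b : SB 0 ≤ M₀ := by
    apply supb; intro x t ht
    rw [hB0 x t ht]
    exact (duhamel_bound hDB hfBnn fB (suple fB hfBb) x t ht).trans (hM₀ ▸ le_max_right _ _)
  have hC0b : SC 0 ≤ M₀ := by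
    apply supb; intro x t ht
    rw [hC0 x t ht, abs_zero]; exact hM₀pos.le
  -- recursive bounds
  have hKnn : ∀ m : ℕ, 0 ≤ (∑ j ∈ Finset.range (m+1), SA j * SB (m - j)) + γ * SC m :=
    fun m => add_nonneg
      (Finset.sum_nonneg fun j _ => mul_nonneg (hSAnn j) (hSBnn _))
      (mul_nonneg hγ (hSCnn m))
  have hKsrc : ∀ m : ℕ, ∀ y : ℝ, ∀ s ∈ Set.Icc (0:ℝ) T,
      |(∑ j ∈ Finset.range (m+1), A j y s * B (m - j) y s) - γ * C m y s|
        ≤ (∑ j ∈ Finset.range (m+1), SA j * SB (m - j)) + γ * SC m := by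
    intro m y s hs
    rw [sub_eq_add_neg]
    refine (abs_add_le _ _).trans ?_
    rw [abs_neg]
    refine add_le_add ?_ ?_
    · refine (Finset.abs_sum_le_sum_abs _ _).trans (Finset.sum_le_sum fun j _ => ?_)
      rw [abs_mul]
      exact mul_le_mul (suple (A j) (hAb j) y s hs) (suple (B (m - j)) (hBb _) y s hs)
        (abs_nonneg _) (hSAnn j)
    · rw [abs_mul, abs_of_nonneg hγ]
      exact mul_le_mul_of_nonneg_left (suple (C m) (hCb m) y s hs) hγ
  have hrecA : ∀ m : ℕ, SA (m+1)
      ≤ T * ((∑ j ∈ Finset.range (m+1), SA j * SB (m - j)) + γ * SC m) := by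
    intro m
    apply supb; intro x t ht
    rw [hArec (m+1) (Nat.succ_le_succ (Nat.zero_le m)) x t ht, abs_neg]
    exact duhamel_bound hDA (hKnn m)
      (fun y s => (∑ j ∈ Finset.range (m+1), A j y s * B (m - j) y s) - γ * C m y s)
      (hKsrc m) x t ht
  have hrecB : ∀ m : ℕ, SB (m+1)
      ≤ T * ((∑ j ∈ Finset.range (m+1), SA j * SB (m - j)) + γ * SC m) := by
    intro m
    apply supb; intro x t ht
    rw [hBrec (m+1) (Nat.succ_le_succ (Nat.zero_le m)) x t ht, abs_neg]
    exact duhamel_bound hDB (hKnn m)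
      (fun y s => (∑ j ∈ Finset.range (m+1), A j y s * B (m - j) y s) - γ * C m y s)
      (hKsrc m) x t ht
  have hrecC : ∀ m : ℕ, SC (m+1)
      ≤ T * ((∑ j ∈ Finset.range (m+1), SA j * SB (m - j)) + γ * SC m) := by
    intro m
    apply supb; intro x t ht
    rw [hCrec (m+1) (Nat.succ_le_succ (Nat.zero_le m)) x t ht]
    exact duhamel_bound hDC (hKnn m)
      (fun y s => (∑ j ∈ Finset.range (m+1), A j y s * B (m - j) y s) - γ * C m y s)
      (hKsrc m) x t ht
  -- the geometric parameter
  set q : ℝ := lam * T * (M₀ + γ) with hq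
  have hq0 : 0 ≤ q := by
    rw [hq]; exact mul_nonneg (mul_nonneg hlam.le hT.le) (add_nonneg hM₀pos.le hγ)
  have hX : 0 < T * (12 * M₀ + 10 * γ) := by positivity
  have hlamX : lam * (T * (12 * M₀ + 10 * γ)) < 1 := (lt_div_iff₀ hX).mp hlam'
  have hlamT : 0 ≤ lam * T := mul_nonneg hlam.le hT.le
  have h10q : 10 * q < 1 := by nlinarith [mul_nonneg hlamT hM₀pos.le]
  have h4q : 4 * q ≤ 1/2 := by linarith
  -- key induction with Catalan numbers
  have key : ∀ n : ℕ, lam^n * SA n ≤ M₀ * catalan n * q^n ∧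
      lam^n * SB n ≤ M₀ * catalan n * q^n ∧ lam^n * SC n ≤ M₀ * catalan n * q^n := by
    intro n
    induction n using Nat.strong_induction_on with
    | _ n ih =>
      match n with
      | 0 =>
        simp only [pow_zero, one_mul, catalan_zero, Nat.cast_one, mul_one]
        exact ⟨hA0b, hB0b, hC0b⟩
      | (m+1) =>
        have hlamnn : 0 ≤ lam ^ (m+1) := pow_nonneg hlam.le _
        have hmain : lam^(m+1) *
            (T * ((∑ j ∈ Finset.range (m+1), SA j * SB (m - j)) + γ * SC m))
            ≤ M₀ * catalan (m+1) * q^(m+1) := by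
          have e1 : lam^(m+1) *
              (T * ((∑ j ∈ Finset.range (m+1), SA j * SB (m - j)) + γ * SC m))
              = lam * T * ((∑ j ∈ Finset.range (m+1),
                  (lam^j * SA j) * (lam^(m-j) * SB (m-j))) + γ * (lam^m * SC m)) := by
            have e2 : ∀ j ∈ Finset.range (m+1),
                (lam^j * SA j) * (lam^(m-j) * SB (m-j)) = lam^m * (SA j * SB (m-j)) := by
              intro j hj
              have hjm : j ≤ m := Nat.lt_succ_iff.mp (Finset.mem_range.mp hj)
              rw [show lam^j * SA j * (lam^(m-j) * SB (m-j))
                = (lam^j * lam^(m-j)) * (SA j * SB (m-j)) by ring,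
                ← pow_add, Nat.add_sub_cancel' hjm]
            rw [Finset.sum_congr rfl e2, ← Finset.mul_sum, pow_succ]
            ring
          have hterm : (∑ j ∈ Finset.range (m+1), (lam^j * SA j) * (lam^(m-j) * SB (m-j)))
              ≤ ∑ j ∈ Finset.range (m+1),
                  (M₀ * catalan j * q^j) * (M₀ * catalan (m-j) * q^(m-j)) := by
            refine Finset.sum_le_sum fun j hj => ?_
            have hjm : j < m + 1 := Finset.mem_range.mp hj
            have hmj : m - j < m + 1 := Nat.lt_succ_of_le (Nat.sub_le m j)
            exact mul_le_mul ((ih j hjm).1) ((ih (m-j) hmj).2.1)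
              (mul_nonneg (pow_nonneg hlam.le _) (hSBnn _))
              (mul_nonneg (mul_nonneg hM₀pos.le (Nat.cast_nonneg _)) (pow_nonneg hq0 _))
          have hsum2 : (∑ j ∈ Finset.range (m+1),
                (M₀ * catalan j * q^j) * (M₀ * catalan (m-j) * q^(m-j)))
              = M₀^2 * q^m * catalan (m+1) := by
            rw [catalan_range]
            push_cast
            rw [Finset.mul_sum]
            refine Finset.sum_congr rfl fun j hj => ?_
            have hjm : j ≤ m := Nat.lt_succ_iff.mp (Finset.mem_range.mp hj)
            have hqq : q^j * q^(m-j) = q^m := by rw [← pow_add, Nat.add_sub_cancel' hjm]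
            rw [show (M₀ * (catalan j : ℝ) * q^j) * (M₀ * (catalan (m-j) : ℝ) * q^(m-j))
              = M₀^2 * (q^j * q^(m-j)) * ((catalan j : ℝ) * (catalan (m-j) : ℝ)) by ring, hqq]
          have hγterm : γ * (lam^m * SC m) ≤ γ * (M₀ * catalan (m+1) * q^m) := by
            refine mul_le_mul_of_nonneg_left (((ih m (Nat.lt_succ_self m)).2.2).trans ?_) hγ
            have : (catalan m : ℝ) ≤ (catalan (m+1) : ℝ) := by
              exact_mod_cast catalan_mono_succ m
            exact mul_le_mul_of_nonneg_right
              (mul_le_mul_of_nonneg_left this hM₀pos.le) (pow_nonneg hq0 m)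
          calc lam^(m+1) *
              (T * ((∑ j ∈ Finset.range (m+1), SA j * SB (m - j)) + γ * SC m))
              = lam * T * ((∑ j ∈ Finset.range (m+1),
                  (lam^j * SA j) * (lam^(m-j) * SB (m-j))) + γ * (lam^m * SC m)) := e1
            _ ≤ lam * T * ((M₀^2 * q^m * catalan (m+1)) + γ * (M₀ * catalan (m+1) * q^m)) := by
                refine mul_le_mul_of_nonneg_left (add_le_add ?_ hγterm) hlamT
                exact hterm.trans_eq hsum2
            _ = M₀ * catalan (m+1) * q^(m+1) := by
                rw [hq, pow_succ]; ring
        refine ⟨?_, ?_, ?_⟩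
        · exact (mul_le_mul_of_nonneg_left (hrecA m) hlamnn).trans hmain
        · exact (mul_le_mul_of_nonneg_left (hrecB m) hlamnn).trans hmain
        · exact (mul_le_mul_of_nonneg_left (hrecC m) hlamnn).trans hmain
  -- conclusion
  have conclude : ∀ (n : ℕ) (S : ℝ), lam^n * S ≤ M₀ * catalan n * q^n →
      lam^n * S ≤ M₀ / 2^n := by
    intro n S h
    refine h.trans ?_
    have hc : (catalan n : ℝ) ≤ 4^n := by exact_mod_cast catalan_le_four_pow n
    calc M₀ * catalan n * q^n ≤ M₀ * 4^n * q^n :=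
          mul_le_mul_of_nonneg_right (mul_le_mul_of_nonneg_left hc hM₀pos.le)
            (pow_nonneg hq0 n)
      _ = M₀ * (4*q)^n := by rw [mul_assoc, ← mul_pow]
      _ ≤ M₀ * (1/2)^n := mul_le_mul_of_nonneg_left
          (pow_le_pow_left₀ (mul_nonneg (by norm_num) hq0) h4q n) hM₀pos.le
      _ = M₀ / 2^n := by rw [div_pow, one_pow]; ring
  exact ⟨conclude i _ (key i).1, conclude i _ (key i).2.1, conclude i _ (key i).2.2⟩
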